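/- (Convergence in mean square) With ξ a mixture containing μ with weight w_μ > 0, for every n: Σ_{k=1}^n Σ_{x_{1:k}} μ(x_{<k}) · (μ(x_k|x_{<k}) − ξ(x_k|x_{<k}))² ≤ H_n ≤ ln(1/w_μ) < ∞. In particular, the infinite sum over k of the μ-expected squared differences of conditional probabilities is finite. -/

import Mathlib

open scoped BigOperators

/-- Conditional probability ρ(a | l) := ρ(l·a)/ρ(l) via Bayes' rule. -/
noncomputable def condP {A : Type} [Fintype A] (ρ : List A → ℝ) (l : List A) (a : A) : ℝ :=
  ρ (l ++ [a]) / ρ l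

/-- Cumulative expected conditional relative entropy H_n between μ and ξ. -/
noncomputable def relEnt {A : Type} [Fintype A] (μ ξ : List A → ℝ) (n : ℕ) : ℝ :=
  ∑ k ∈ Finset.range n, ∑ x : Fin k → A, μ (List.ofFn x) *
    ∑ a : A, condP μ (List.ofFn x) a * Real.log (condP μ (List.ofFn x) a / condP ξ (List.ofFn x) a)


section MSHelpers
open Finset

lemma logsum_aux {A : Type} [Fintype A] (s : Finset A) (p q : A → ℝ)
    (hp : ∀ a, 0 ≤ p a) (hq : ∀ a, 0 ≤ q a) (hpq : ∀ a, p a ≠ 0 → 0 < q a) :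
    (∑ a ∈ s, p a) * Real.log ((∑ a ∈ s, p a) / (∑ a ∈ s, q a)) ≤
      ∑ a ∈ s, p a * Real.log (p a / q a) := by
  set P := ∑ a ∈ s, p a with hPdef
  set Q := ∑ a ∈ s, q a with hQdef
  by_cases hP : P = 0
  · have hz : ∀ a ∈ s, p a = 0 :=
      (Finset.sum_eq_zero_iff_of_nonneg (fun a _ => hp a)).mp hP
    rw [hP, zero_mul]
    apply Finset.sum_nonneg
    intro a ha
    rw [hz a ha, zero_mul]
  · have hPpos : 0 < P := lt_of_le_of_ne (Finset.sum_nonneg fun a _ => hp a) (Ne.symm hP)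
    have hQpos : 0 < Q := by
      obtain ⟨a, ha, hpa⟩ : ∃ a ∈ s, p a ≠ 0 := by
        by_contra h
        push_neg at h
        exact hP (Finset.sum_eq_zero h)
      calc (0:ℝ) < q a := hpq a hpa
        _ ≤ Q := Finset.single_le_sum (fun b _ => hq b) ha
    have key : ∀ a ∈ s, p a * Real.log (P / Q) + (p a - q a * (P / Q)) ≤
        p a * Real.log (p a / q a) := by
      intro a _
      by_cases hpa : p a = 0
      · have : (0:ℝ) ≤ q a * (P / Q) :=
          mul_nonneg (hq a) (div_nonneg hPpos.le hQpos.le)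
        simp [hpa]
        linarith
      · have hpa' : 0 < p a := lt_of_le_of_ne (hp a) (Ne.symm hpa)
        have hqa : 0 < q a := hpq a hpa
        have hx : 0 < (p a * Q) / (q a * P) :=
          div_pos (mul_pos hpa' hQpos) (mul_pos hqa hPpos)
        have h1 : 1 - ((p a * Q) / (q a * P))⁻¹ ≤ Real.log ((p a * Q) / (q a * P)) :=
          Real.one_sub_inv_le_log_of_pos hx
        have hinv : ((p a * Q) / (q a * P))⁻¹ = (q a * P) / (p a * Q) := by
          rw [inv_div]
        have hlogeq : Real.log ((p a * Q) / (q a * P)) =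
            Real.log (p a / q a) - Real.log (P / Q) := by
          rw [show (p a * Q) / (q a * P) = (p a / q a) / (P / Q) by
            field_simp]
          rw [Real.log_div (div_pos hpa' hqa).ne' (div_pos hPpos hQpos).ne']
        rw [hinv, hlogeq] at h1
        have h2 := mul_le_mul_of_nonneg_left h1 hpa'.le
        have h3 : p a * (1 - q a * P / (p a * Q)) = p a - q a * (P / Q) := by
          field_simp
        nlinarith [h2, h3]
    calc P * Real.log (P / Q)
        = ∑ a ∈ s, (p a * Real.log (P / Q) + (p a - q a * (P / Q))) := by
          rw [Finset.sum_add_distrib, ← Finset.sum_mul, Finset.sum_sub_distrib,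
            ← Finset.sum_mul, ← hPdef, ← hQdef, mul_div_cancel₀ _ (ne_of_gt hQpos)]
          ring
      _ ≤ ∑ a ∈ s, p a * Real.log (p a / q a) := Finset.sum_le_sum key


lemma binPinsker {P Q : ℝ} (hQ0 : 0 < Q) (hQP : Q ≤ P) (hP1 : P ≤ 1) :
    2 * (P - Q) ^ 2 ≤ P * Real.log (P / Q) + (1 - P) * Real.log ((1 - P) / (1 - Q)) := by
  rcases eq_or_lt_of_le hQP with h | h
  · subst h
    rw [div_self (ne_of_gt hQ0), Real.log_one, mul_zero]
    by_cases h1 : Q = 1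
    · simp [h1]
    · have : (1 - Q) / (1 - Q) = 1 :=
        div_self (sub_ne_zero.mpr (Ne.symm h1))
      rw [this, Real.log_one]
      simp
  · have hQ1 : Q < 1 := lt_of_lt_of_le h hP1
    have hP0 : 0 < P := lt_trans hQ0 h
    by_cases hP : P = 1
    · subst hP
      rw [sub_self, zero_mul, add_zero, one_mul]
      -- goal : 2 * (1 - Q)^2 ≤ log (1/Q)
      set G : ℝ → ℝ := fun t => -Real.log t - 2 * (1 - t) ^ 2 with hG
      have hanti : AntitoneOn G (Set.Icc Q 1) := by
        apply antitoneOn_of_deriv_nonpos (convex_Icc _ _)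
        · apply ContinuousOn.sub
          · exact (Real.continuousOn_log.mono (by
              intro t ht
              simp only [Set.mem_Icc] at ht
              simp [ne_of_gt (lt_of_lt_of_le hQ0 ht.1)])).neg
          · fun_prop
        · intro t ht
          rw [interior_Icc] at ht
          have ht0 : 0 < t := lt_trans hQ0 ht.1
          exact (((Real.hasDerivAt_log (ne_of_gt ht0)).neg).sub
            (((hasDerivAt_id t).const_sub 1).pow 2 |>.const_mul 2)).differentiableAt.differentiableWithinAt
        · intro t ht
          rw [interior_Icc] at ht
          have ht0 : 0 < t := lt_trans hQ0 ht.1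
          have hd : HasDerivAt G (-t⁻¹ - 2 * (2 * (1 - t) ^ 1 * (0 - 1))) t :=
            ((Real.hasDerivAt_log (ne_of_gt ht0)).neg).sub
              ((((hasDerivAt_const t (1:ℝ)).sub (hasDerivAt_id t)).pow 2).const_mul 2)
          rw [hd.deriv]
          have h4 : 4 * (1 - t) * t ≤ 1 := by nlinarith [sq_nonneg (2 * t - 1)]
          have : 4 * (1 - t) ≤ t⁻¹ := by
            rw [inv_eq_one_div, le_div_iff₀ ht0]
            linarith
          nlinarith
      have hGQ : G Q ≥ G 1 := hanti (Set.mem_Icc.mpr ⟨le_refl Q, hQ1.le⟩)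
        (Set.mem_Icc.mpr ⟨hQP, le_refl 1⟩) hQ1.le
      have hG1 : G 1 = 0 := by simp [hG]
      rw [Real.log_div one_ne_zero (ne_of_gt hQ0), Real.log_one]
      simp only [hG] at hGQ hG1
      linarith
    · have hP1' : P < 1 := lt_of_le_of_ne hP1 hP
      set F : ℝ → ℝ := fun t => P * (Real.log P - Real.log t) +
        (1 - P) * (Real.log (1 - P) - Real.log (1 - t)) - 2 * (P - t) ^ 2 with hF
      have hanti : AntitoneOn F (Set.Icc Q P) := by
        apply antitoneOn_of_deriv_nonpos (convex_Icc _ _)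
        · apply ContinuousOn.sub
          · apply ContinuousOn.add
            · apply ContinuousOn.mul continuousOn_const
              apply ContinuousOn.sub continuousOn_const
              exact Real.continuousOn_log.mono (by
                intro t ht
                simp only [Set.mem_Icc] at ht
                simp [ne_of_gt (lt_of_lt_of_le hQ0 ht.1)])
            · apply ContinuousOn.mul continuousOn_const
              apply ContinuousOn.sub continuousOn_const
              apply ContinuousOn.comp Real.continuousOn_log (by fun_prop)
              intro t ht
              simp only [Set.mem_Icc] at ht
              have : t < 1 := lt_of_le_of_lt ht.2 hP1'
              simp [ne_of_gt (sub_pos.mpr this)]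
          · fun_prop
        · intro t ht
          rw [interior_Icc] at ht
          have ht0 : 0 < t := lt_trans hQ0 ht.1
          have ht1 : t < 1 := lt_trans ht.2 hP1'
          have hd : HasDerivAt (fun t => Real.log (1 - t)) ((1-t)⁻¹ * (0 - 1)) t :=
            (Real.hasDerivAt_log (ne_of_gt (sub_pos.mpr ht1))).comp t
              ((hasDerivAt_const t (1:ℝ)).sub (hasDerivAt_id t))
          exact (((hasDerivAt_const t (Real.log P)).sub
            (Real.hasDerivAt_log (ne_of_gt ht0))).const_mul P |>.add
            (((hasDerivAt_const t (Real.log (1-P))).sub hd).const_mul (1-P)) |>.sub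
            ((((hasDerivAt_const t P).sub (hasDerivAt_id t)).pow 2).const_mul 2)).differentiableAt.differentiableWithinAt
        · intro t ht
          rw [interior_Icc] at ht
          have ht0 : 0 < t := lt_trans hQ0 ht.1
          have ht1 : t < 1 := lt_trans ht.2 hP1'
          have htP : t < P := ht.2
          have hd1 : HasDerivAt (fun t => Real.log (1 - t)) ((1-t)⁻¹ * (0 - 1)) t :=
            (Real.hasDerivAt_log (ne_of_gt (sub_pos.mpr ht1))).comp t
              ((hasDerivAt_const t (1:ℝ)).sub (hasDerivAt_id t))
          have hd : HasDerivAt F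
              (P * (0 - t⁻¹) + (1 - P) * (0 - (1-t)⁻¹ * (0 - 1)) -
                2 * (2 * (P - t) ^ 1 * (0 - 1))) t :=
            (((hasDerivAt_const t (Real.log P)).sub
              (Real.hasDerivAt_log (ne_of_gt ht0))).const_mul P |>.add
              (((hasDerivAt_const t (Real.log (1-P))).sub hd1).const_mul (1-P)) |>.sub
              ((((hasDerivAt_const t P).sub (hasDerivAt_id t)).pow 2).const_mul 2))
          rw [hd.deriv]
          have hkey : P * (0 - t⁻¹) + (1 - P) * (0 - (1-t)⁻¹ * (0 - 1)) -
              2 * (2 * (P - t) ^ 1 * (0 - 1)) =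
              ((P - t) * (4 * t * (1 - t) - 1)) / (t * (1 - t)) := by
            have hden : (0:ℝ) < t * (1 - t) := mul_pos ht0 (sub_pos.mpr ht1)
            rw [eq_div_iff (ne_of_gt hden)]
            field_simp [ht0.ne', (sub_pos.mpr ht1).ne']
            ring
          rw [hkey]
          apply div_nonpos_of_nonpos_of_nonneg
          · apply mul_nonpos_of_nonneg_of_nonpos
            · linarith
            · nlinarith [sq_nonneg (2 * t - 1)]
          · exact (mul_pos ht0 (sub_pos.mpr ht1)).le
      have hFQ : F Q ≥ F P := hanti (Set.mem_Icc.mpr ⟨le_refl Q, hQP⟩)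
        (Set.mem_Icc.mpr ⟨hQP, le_refl P⟩) hQP
      have hFP : F P = 0 := by simp [hF]
      have hval : F Q = P * Real.log (P / Q) + (1 - P) * Real.log ((1 - P) / (1 - Q))
          - 2 * (P - Q) ^ 2 := by
        rw [hF]
        rw [Real.log_div (ne_of_gt hP0) (ne_of_gt hQ0),
          Real.log_div (ne_of_gt (sub_pos.mpr hP1')) (ne_of_gt (sub_pos.mpr hQ1))]
      rw [hFP, hval] at hFQ
      linarith

lemma pinsker {A : Type} [Fintype A] (p q : A → ℝ)
    (hp : ∀ a, 0 ≤ p a) (hq : ∀ a, 0 ≤ q a)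
    (hps : ∑ a, p a = 1) (hqs : ∑ a, q a = 1)
    (hpq : ∀ a, p a ≠ 0 → 0 < q a) :
    ∑ a, (p a - q a) ^ 2 ≤ ∑ a, p a * Real.log (p a / q a) := by
  classical
  set S : Finset A := Finset.univ.filter (fun a => q a ≤ p a) with hS
  set P := ∑ a ∈ S, p a with hPdef
  set Q := ∑ a ∈ S, q a with hQdef
  have hmem : ∀ a ∈ S, q a ≤ p a := fun a ha => (Finset.mem_filter.mp ha).2
  have hmemc : ∀ a ∈ Sᶜ, p a ≤ q a := by
    intro a ha
    have := Finset.mem_compl.mp ha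
    rw [hS, Finset.mem_filter] at this
    push_neg at this
    exact (this (Finset.mem_univ a)).le
  have hPQ : Q ≤ P := Finset.sum_le_sum hmem
  have hsplitp : P + ∑ a ∈ Sᶜ, p a = 1 := by
    rw [hPdef, Finset.sum_add_sum_compl]; exact hps
  have hsplitq : Q + ∑ a ∈ Sᶜ, q a = 1 := by
    rw [hQdef, Finset.sum_add_sum_compl]; exact hqs
  set d := P - Q with hd
  have hd0 : 0 ≤ d := sub_nonneg.mpr hPQ
  have hdS : ∑ a ∈ S, (p a - q a) = d := by
    rw [Finset.sum_sub_distrib, ← hPdef, ← hQdef]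
  have hdSc : ∑ a ∈ Sᶜ, (q a - p a) = d := by
    rw [Finset.sum_sub_distrib]
    have : ∑ a ∈ Sᶜ, q a = 1 - Q := by linarith
    have h2 : ∑ a ∈ Sᶜ, p a = 1 - P := by linarith
    rw [this, h2]; ring
  have habs : ∀ a, |p a - q a| ≤ d := by
    intro a
    by_cases ha : q a ≤ p a
    · rw [abs_of_nonneg (sub_nonneg.mpr ha), ← hdS]
      exact Finset.single_le_sum (f := fun a => p a - q a)
        (fun b hb => sub_nonneg.mpr (hmem b hb))
        (by rw [hS]; exact Finset.mem_filter.mpr ⟨Finset.mem_univ a, ha⟩)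
    · rw [abs_of_nonpos (sub_nonpos.mpr (le_of_not_ge ha)), neg_sub, ← hdSc]
      exact Finset.single_le_sum (f := fun a => q a - p a)
        (fun b hb => sub_nonneg.mpr (hmemc b hb))
        (by
          rw [Finset.mem_compl, hS, Finset.mem_filter]
          push_neg
          intro _
          exact lt_of_not_ge ha)
  have hL1 : ∑ a, |p a - q a| = 2 * d := by
    rw [← Finset.sum_add_sum_compl S]
    have h1 : ∑ a ∈ S, |p a - q a| = d := by
      rw [← hdS]
      exact Finset.sum_congr rfl fun a ha => abs_of_nonneg (sub_nonneg.mpr (hmem a ha))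
    have h2 : ∑ a ∈ Sᶜ, |p a - q a| = d := by
      rw [← hdSc]
      exact Finset.sum_congr rfl fun a ha => by
        rw [abs_of_nonpos (sub_nonpos.mpr (hmemc a ha)), neg_sub]
    rw [h1, h2]; ring
  have hsq : ∑ a, (p a - q a) ^ 2 ≤ 2 * d ^ 2 := by
    calc ∑ a, (p a - q a) ^ 2 = ∑ a, |p a - q a| * |p a - q a| := by
          refine Finset.sum_congr rfl fun a _ => ?_
          rw [← sq_abs, sq]
      _ ≤ ∑ a, d * |p a - q a| :=
          Finset.sum_le_sum fun a _ =>
            mul_le_mul_of_nonneg_right (habs a) (abs_nonneg _)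
      _ = d * (2 * d) := by rw [← Finset.mul_sum, hL1]
      _ = 2 * d ^ 2 := by ring
  have hKL : 2 * d ^ 2 ≤ ∑ a, p a * Real.log (p a / q a) := by
    by_cases hQ0 : Q = 0
    · have hQ0' : ∑ a ∈ S, q a = 0 := by rw [← hQdef]; exact hQ0
      have hqz : ∀ a ∈ S, q a = 0 :=
        (Finset.sum_eq_zero_iff_of_nonneg (fun a _ => hq a)).mp hQ0'
      have hpz : ∀ a ∈ S, p a = 0 := by
        intro a ha
        by_contra hpa
        exact absurd (hqz a ha) (ne_of_gt (hpq a hpa))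
      have hP0 : P = 0 := Finset.sum_eq_zero hpz
      have hd0' : d = 0 := by rw [hd, hP0, hQ0]; ring
      rw [hd0']
      have := logsum_aux Finset.univ p q hp hq hpq
      rw [hps, hqs] at this
      simpa using this
    · have hQpos : 0 < Q :=
        lt_of_le_of_ne (Finset.sum_nonneg fun a _ => hq a) (Ne.symm hQ0)
      have hP1 : P ≤ 1 := by
        have : 0 ≤ ∑ a ∈ Sᶜ, p a := Finset.sum_nonneg fun a _ => hp a
        linarith
      have hbinary := binPinsker hQpos hPQ hP1
      have hls1 := logsum_aux S p q hp hq hpq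
      have hls2 := logsum_aux Sᶜ p q hp hq hpq
      have e1 : ∑ a ∈ Sᶜ, p a = 1 - P := by linarith
      have e2 : ∑ a ∈ Sᶜ, q a = 1 - Q := by linarith
      rw [e1, e2] at hls2
      have hsum : ∑ a, p a * Real.log (p a / q a) =
          (∑ a ∈ S, p a * Real.log (p a / q a)) +
          ∑ a ∈ Sᶜ, p a * Real.log (p a / q a) :=
        (Finset.sum_add_sum_compl S _).symm
      rw [hsum]
      calc 2 * d ^ 2 ≤ P * Real.log (P / Q) + (1 - P) * Real.log ((1 - P) / (1 - Q)) :=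
            hbinary
        _ ≤ _ := add_le_add hls1 hls2
  exact le_trans hsq hKL


lemma ofFn_snoc' {A : Type} {n : ℕ} (y : Fin n → A) (a : A) :
    List.ofFn (Fin.snoc y a : Fin (n+1) → A) = List.ofFn y ++ [a] := by
  rw [List.ofFn_succ']
  simp [Fin.snoc_castSucc, Fin.snoc_last, List.concat_eq_append]

lemma sum_fn_succ {A : Type} [Fintype A] {n : ℕ} (f : List A → ℝ) :
    ∑ x : Fin (n+1) → A, f (List.ofFn x) =
      ∑ y : Fin n → A, ∑ a : A, f (List.ofFn y ++ [a]) := by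
  rw [← (Fin.snocEquiv (fun _ => A)).sum_comp (fun x => f (List.ofFn x))]
  rw [Fintype.sum_prod_type]
  rw [Finset.sum_comm]
  refine Finset.sum_congr rfl fun y _ => Finset.sum_congr rfl fun a _ => ?_
  show f (List.ofFn (Fin.snoc y a)) = _
  rw [ofFn_snoc']

section
variable {A : Type} [Fintype A] (μ ξ : List A → ℝ) (w0 : ℝ)
variable (hμ0 : ∀ l, 0 ≤ μ l) (hμc : ∀ l, ∑ a : A, μ (l ++ [a]) = μ l)
variable (hξ0 : ∀ l, 0 ≤ ξ l) (hξc : ∀ l, ∑ a : A, ξ (l ++ [a]) = ξ l)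
variable (hw : 0 < w0) (hdom : ∀ l, w0 * μ l ≤ ξ l)
variable (hμroot : μ [] = 1) (hξroot : ξ [] = 1)

include hμ0 hμc in
lemma mass' (hμroot : μ [] = 1) : ∀ n : ℕ, ∑ x : Fin n → A, μ (List.ofFn x) = 1 := by
  intro n
  induction n with
  | zero =>
    rw [show ∑ x : Fin 0 → A, μ (List.ofFn x) = μ [] from by
      rw [Fintype.sum_eq_single (fun i => i.elim0) (fun x hx => absurd (funext fun i => i.elim0) hx)]
      simp]
    exact hμroot
  | succ n ih =>
    rw [sum_fn_succ]
    calc ∑ y : Fin n → A, ∑ a : A, μ (List.ofFn y ++ [a])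
        = ∑ y : Fin n → A, μ (List.ofFn y) :=
          Finset.sum_congr rfl fun y _ => hμc _
      _ = 1 := ih

-- mono: μ of extension ≤ μ and each μ(l++[a]) = 0 if μ l = 0
include hμ0 hμc in
lemma mu_app_le (l : List A) (a : A) : μ (l ++ [a]) ≤ μ l := by
  rw [← hμc l]
  exact Finset.single_le_sum (f := fun b => μ (l ++ [b])) (fun b _ => hμ0 _) (Finset.mem_univ a)

-- chain rule step
include hμ0 hμc hξ0 hw hdom in
lemma chain_step (l : List A) :
    ∑ a : A, μ (l ++ [a]) * Real.log (μ (l ++ [a]) / ξ (l ++ [a]))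
      = μ l * Real.log (μ l / ξ l) +
        μ l * ∑ a : A, condP μ l a * Real.log (condP μ l a / condP ξ l a) := by
  by_cases hl : μ l = 0
  · have hz : ∀ a : A, μ (l ++ [a]) = 0 := fun a =>
      le_antisymm (hl ▸ mu_app_le μ hμ0 hμc l a) (hμ0 _)
    simp [hl, hz]
  · have hlpos : 0 < μ l := lt_of_le_of_ne (hμ0 l) (Ne.symm hl)
    have hξl : 0 < ξ l := lt_of_lt_of_le (mul_pos hw hlpos) (hdom l)
    have key : ∀ a : A, μ (l ++ [a]) * Real.log (μ (l ++ [a]) / ξ (l ++ [a]))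
        = μ (l ++ [a]) * Real.log (μ l / ξ l) +
          μ l * (condP μ l a * Real.log (condP μ l a / condP ξ l a)) := by
      intro a
      by_cases ha : μ (l ++ [a]) = 0
      · simp [ha, condP, zero_div]
      · have hapos : 0 < μ (l ++ [a]) := lt_of_le_of_ne (hμ0 _) (Ne.symm ha)
        have hξa : 0 < ξ (l ++ [a]) := lt_of_lt_of_le (mul_pos hw hapos) (hdom _)
        have hcond : condP μ l a = μ (l ++ [a]) / μ l := rfl
        have hcondξ : condP ξ l a = ξ (l ++ [a]) / ξ l := rfl
        have hratio : condP μ l a / condP ξ l a =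
            (μ (l ++ [a]) / ξ (l ++ [a])) / (μ l / ξ l) := by
          rw [hcond, hcondξ]
          field_simp
        have hlog : Real.log (condP μ l a / condP ξ l a) =
            Real.log (μ (l ++ [a]) / ξ (l ++ [a])) - Real.log (μ l / ξ l) := by
          rw [hratio, Real.log_div (div_pos hapos hξa).ne' (div_pos hlpos hξl).ne']
        have hmul : μ l * condP μ l a = μ (l ++ [a]) := by
          rw [hcond, mul_div_cancel₀ _ hl]
        rw [hlog]
        rw [show μ l * (condP μ l a * (Real.log (μ (l ++ [a]) / ξ (l ++ [a])) - Real.log (μ l / ξ l)))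
            = (μ l * condP μ l a) * (Real.log (μ (l ++ [a]) / ξ (l ++ [a])) - Real.log (μ l / ξ l)) from by ring]
        rw [hmul]
        ring
    rw [Finset.sum_congr rfl fun a _ => key a, Finset.sum_add_distrib,
      ← Finset.sum_mul, hμc, ← Finset.mul_sum]

include hμ0 hμc hξ0 hξc hw hdom hμroot hξroot in
lemma relEnt_eq (n : ℕ) :
    relEnt μ ξ n = ∑ x : Fin n → A, μ (List.ofFn x) * Real.log (μ (List.ofFn x) / ξ (List.ofFn x)) := by
  induction n with
  | zero =>
    rw [relEnt, Finset.range_zero, Finset.sum_empty]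
    rw [show ∑ x : Fin 0 → A, μ (List.ofFn x) * Real.log (μ (List.ofFn x) / ξ (List.ofFn x))
        = μ [] * Real.log (μ [] / ξ []) from by
      rw [Fintype.sum_eq_single (fun i => i.elim0) (fun x hx => absurd (funext fun i => i.elim0) hx)]
      simp]
    rw [hμroot, hξroot]
    simp
  | succ n ih =>
    rw [relEnt, Finset.sum_range_succ, ← relEnt, ih, sum_fn_succ
      (fun l => μ l * Real.log (μ l / ξ l))]
    rw [Finset.sum_congr rfl fun y _ => chain_step μ ξ w0 hμ0 hμc hξ0 hw hdom (List.ofFn y)]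
    rw [Finset.sum_add_distrib]
end
end MSHelpers

/-- Convergence in mean square: the cumulative μ-expected squared difference of the
conditional probabilities of μ and ξ is bounded by H_n ≤ ln(1/w_μ) < ∞; in particular
the infinite sum over k of the expected squared differences is finite (summable). -/
theorem mean_square_convergence {A : Type} [Fintype A]
    (μs : ℕ → List A → ℝ) (w : ℕ → ℝ)
    (hwpos : ∀ i, 0 < w i) (hwsum : HasSum w 1)
    (hnn : ∀ i l, 0 ≤ μs i l)
    (hroot : ∀ i, μs i [] = 1)
    (hcompat : ∀ i l, ∑ a : A, μs i (l ++ [a]) = μs i l)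
    (ξ : List A → ℝ) (hξ : ∀ l, ξ l = ∑' i, w i * μs i l)
    (i0 : ℕ)
    :
    (∀ n : ℕ,
      (∑ k ∈ Finset.range n, ∑ x : Fin k → A, μs i0 (List.ofFn x) *
          ∑ a : A, (condP (μs i0) (List.ofFn x) a - condP ξ (List.ofFn x) a) ^ 2) ≤
        relEnt (μs i0) ξ n ∧
      relEnt (μs i0) ξ n ≤ Real.log (1 / w i0)) ∧
    Summable (fun k : ℕ => ∑ x : Fin k → A, μs i0 (List.ofFn x) *
        ∑ a : A, (condP (μs i0) (List.ofFn x) a - condP ξ (List.ofFn x) a) ^ 2) := by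
  classical
  set μ := μs i0 with hμdef
  have hμ0 : ∀ l, 0 ≤ μ l := hnn i0
  have hμc : ∀ l, ∑ a : A, μ (l ++ [a]) = μ l := hcompat i0
  have hμroot : μ [] = 1 := hroot i0
  have hw : 0 < w i0 := hwpos i0
  have hle1 : ∀ i l, μs i l ≤ 1 := by
    intro i l
    induction l using List.reverseRecOn with
    | nil => rw [hroot]
    | append_singleton l a ih =>
      refine le_trans ?_ ih
      rw [← hcompat i l]
      exact Finset.single_le_sum (f := fun b => μs i (l ++ [b]))
        (fun b _ => hnn i _) (Finset.mem_univ a)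
  have hsumm : ∀ l, Summable (fun i => w i * μs i l) := by
    intro l
    exact Summable.of_nonneg_of_le (fun i => mul_nonneg (hwpos i).le (hnn i l))
      (fun i => mul_le_of_le_one_right (hwpos i).le (hle1 i l)) hwsum.summable
  have hξ0 : ∀ l, 0 ≤ ξ l := fun l =>
    (hξ l) ▸ tsum_nonneg (fun i => mul_nonneg (hwpos i).le (hnn i l))
  have hdom : ∀ l, w i0 * μ l ≤ ξ l := by
    intro l
    rw [hξ l]
    exact Summable.le_tsum (hsumm l) i0 (fun j _ => mul_nonneg (hwpos j).le (hnn j l))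
  have hξroot : ξ [] = 1 := by
    rw [hξ []]
    have h1 : (fun i => w i * μs i []) = w := funext fun i => by rw [hroot i, mul_one]
    rw [h1, hwsum.tsum_eq]
  have hξc : ∀ l, ∑ a : A, ξ (l ++ [a]) = ξ l := by
    intro l
    simp only [hξ]
    rw [← Summable.tsum_finsetSum (f := fun a i => w i * μs i (l ++ [a])) (fun a _ => hsumm (l ++ [a]))]
    exact tsum_congr fun i => by rw [← Finset.mul_sum, hcompat]
  have hmass := mass' μ hμ0 hμc hμroot
  have hpinx : ∀ (l : List A),
      μ l * ∑ a : A, (condP μ l a - condP ξ l a) ^ 2 ≤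
      μ l * ∑ a : A, condP μ l a * Real.log (condP μ l a / condP ξ l a) := by
    intro l
    by_cases hl : μ l = 0
    · rw [hl, zero_mul, zero_mul]
    · have hlpos : 0 < μ l := lt_of_le_of_ne (hμ0 l) (Ne.symm hl)
      have hξl : 0 < ξ l := lt_of_lt_of_le (mul_pos hw hlpos) (hdom l)
      refine mul_le_mul_of_nonneg_left ?_ (hμ0 l)
      refine pinsker (fun a => condP μ l a) (fun a => condP ξ l a)
        (fun a => div_nonneg (hμ0 _) (hμ0 l))
        (fun a => div_nonneg (hξ0 _) (hξ0 l)) ?_ ?_ ?_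
      · rw [show ∑ a : A, condP μ l a = (∑ a : A, μ (l ++ [a])) / μ l from
          (Finset.sum_div _ _ _).symm, hμc, div_self hl]
      · rw [show ∑ a : A, condP ξ l a = (∑ a : A, ξ (l ++ [a])) / ξ l from
          (Finset.sum_div _ _ _).symm, hξc, div_self (ne_of_gt hξl)]
      · intro a hpa
        have hμa : μ (l ++ [a]) ≠ 0 := by
          intro h
          exact hpa (by simp [condP, h])
        have hξa : 0 < ξ (l ++ [a]) :=
          lt_of_lt_of_le (mul_pos hw (lt_of_le_of_ne (hμ0 _) (Ne.symm hμa))) (hdom (l ++ [a]))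
        exact div_pos hξa hξl
  have hpart1 : ∀ n : ℕ,
      (∑ k ∈ Finset.range n, ∑ x : Fin k → A, μs i0 (List.ofFn x) *
          ∑ a : A, (condP (μs i0) (List.ofFn x) a - condP ξ (List.ofFn x) a) ^ 2) ≤
        relEnt (μs i0) ξ n ∧
      relEnt (μs i0) ξ n ≤ Real.log (1 / w i0) := by
    intro n
    constructor
    · rw [relEnt]
      refine Finset.sum_le_sum fun k _ => Finset.sum_le_sum fun x _ => ?_
      exact hpinx (List.ofFn x)
    · rw [relEnt_eq μ ξ (w i0) hμ0 hμc hξ0 hξc hw hdom hμroot hξroot n]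
      calc ∑ x : Fin n → A, μ (List.ofFn x) * Real.log (μ (List.ofFn x) / ξ (List.ofFn x))
          ≤ ∑ x : Fin n → A, μ (List.ofFn x) * Real.log (1 / w i0) := by
            refine Finset.sum_le_sum fun x _ => ?_
            by_cases hl : μ (List.ofFn x) = 0
            · rw [hl, zero_mul, zero_mul]
            · have hlpos : 0 < μ (List.ofFn x) := lt_of_le_of_ne (hμ0 _) (Ne.symm hl)
              have hξl : 0 < ξ (List.ofFn x) := lt_of_lt_of_le (mul_pos hw hlpos) (hdom _)
              refine mul_le_mul_of_nonneg_left ?_ (hμ0 _)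
              refine Real.log_le_log (div_pos hlpos hξl) ?_
              rw [div_le_div_iff₀ hξl hw]
              nlinarith [hdom (List.ofFn x)]
        _ = Real.log (1 / w i0) := by
            rw [← Finset.sum_mul, hmass n, one_mul]
  refine ⟨hpart1, ?_⟩
  refine summable_of_sum_range_le (c := Real.log (1 / w i0)) ?_ ?_
  · intro k
    refine Finset.sum_nonneg fun x _ => ?_
    exact mul_nonneg (hμ0 _) (Finset.sum_nonneg fun a _ => sq_nonneg _)
  · intro n
    exact le_trans (hpart1 n).1 (hpart1 n).2
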